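/- Let π be a k-colored permutation of length n, colored with colors from 1 through k, and let (P, Q) = (P(π), Q(π)) be the pair of tableaux obtained from π by the k-ribbon insertion algorithm. Then color(π) = spin(P, Q). -/

import Mathlib

namespace KRF

/-- A letter of the alphabet `{1_1, …, 1_k, 2}`:  `one j` stands for the letter `1_j`
(with `1 ≤ j ≤ k` for genuine letters), and `two` stands for the letter `2`. -/
inductive Letter (k : ℕ) : Type where
  | one : ℕ → Letter k
  | two : Letter k
deriving DecidableEq

/-- A word over the alphabet `{1_1, …, 1_k, 2}`, listed from the leftmost letter to the
rightmost letter. -/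
abbrev Word (k : ℕ) := List (Letter k)

/-- The contribution of a letter to the rank: each `1_j` counts `1` and each `2` counts `2`. -/
def Letter.rank {k : ℕ} : Letter k → ℕ
  | .one _ => 1
  | .two => 2

/-- The rank of a word: the sum of its letters. -/
def Word.rank {k : ℕ} (w : Word k) : ℕ := (w.map Letter.rank).sum

/-- The letter `1_j` is valid when `1 ≤ j ≤ k`. -/
def Letter.Valid (k : ℕ) : Letter k → Prop
  | .one j => 1 ≤ j ∧ j ≤ k
  | .two => True

/-- A genuine word of the Fibonacci poset `Z(k)`: all of its letters are valid. -/
def Word.Valid (k : ℕ) (w : Word k) : Prop := ∀ l ∈ w, l.Valid k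

/-- The cover relation of the Fibonacci poset `Z(k)`:  `z` is covered by `w` iff `z` is
obtained from `w` either by changing a `2` into some `1_j` when all letters to the left of
that `2` are `2`'s, or by deleting the leftmost letter of the form `1_j`. -/
def ZCovers (k : ℕ) (z w : Word k) : Prop :=
  (∃ (p s : Word k) (j : ℕ), (∀ l ∈ p, l = Letter.two) ∧ 1 ≤ j ∧ j ≤ k ∧
      w = p ++ Letter.two :: s ∧ z = p ++ Letter.one j :: s) ∨
  (∃ (p s : Word k) (j : ℕ), (∀ l ∈ p, l = Letter.two) ∧ 1 ≤ j ∧ j ≤ k ∧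
      w = p ++ Letter.one j :: s ∧ z = p ++ s)

/-- `c 0 ⋖ c 1 ⋖ ⋯ ⋖ c n` is a saturated chain in `Z(k)` starting at the empty word. -/
def IsZChain (k n : ℕ) (c : ℕ → Word k) : Prop :=
  c 0 = [] ∧ ∀ i, i < n → ZCovers k (c i) (c (i + 1))

end KRF
namespace KRF

/-- A column of a (tiled and filled) `k`-ribbon Fibonacci tableau.
`single h v` is a column of height 1 (shape letter `1_h`) tiled by one `k`-ribbon of
height `h` filled with the value `v`.
`double ht hb vt vb` is a column of height 2 (shape letter `2`) tiled by a `k`-ribbon of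
height `ht` filled with `vt` stacked on top of a `k`-ribbon of height `hb` (always
`hb = k + 1 - ht` for genuine tableaux) filled with `vb`. -/
inductive Col (k : ℕ) : Type where
  | single : ℕ → ℕ → Col k
  | double : ℕ → ℕ → ℕ → ℕ → Col k
deriving DecidableEq

/-- A (tiled, filled) `k`-ribbon Fibonacci tableau: its list of columns, from the leftmost
column to the rightmost one. -/
abbrev Tab (k : ℕ) := List (Col k)

/-- The shape letter of a column. -/
def Col.shape {k : ℕ} : Col k → Letter k
  | .single h _ => Letter.one h
  | .double _ _ _ _ => Letter.two

/-- The `k`-ribbon Fibonacci shape (a word) underlying a tableau. -/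
def Tab.shape {k : ℕ} (T : Tab k) : Word k := T.map Col.shape

/-- The value in the bottom `k`-ribbon of a column. -/
def Col.bottomVal {k : ℕ} : Col k → ℕ
  | .single _ v => v
  | .double _ _ _ vb => vb

/-- The heights occurring in a column are genuine ribbon heights: between `1` and `k`,
and in a column of height 2 the two heights sum to `k + 1`. -/
def Col.HeightsValid (k : ℕ) : Col k → Prop
  | .single h _ => 1 ≤ h ∧ h ≤ k
  | .double ht hb _ _ => 1 ≤ ht ∧ ht ≤ k ∧ hb = k + 1 - ht

/-- The list of all entries of a tableau (one for each `k`-ribbon). -/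
def Tab.entries {k : ℕ} (T : Tab k) : List ℕ :=
  (T.map fun c => match c with
    | Col.single _ v => [v]
    | Col.double _ _ vt vb => [vt, vb]).flatten

/-- The list of the bottom-ribbon values of the columns of a tableau. -/
def Tab.bottoms {k : ℕ} (T : Tab k) : List ℕ := T.map Col.bottomVal

/-- `T` is a standard `k`-ribbon Fibonacci tableau with entries `1, …, n`:
heights are valid, the entries are exactly `1, …, n`,  and the tableau can be built by
placing `n, n-1, …, 1` in order, each new `k`-ribbon being either appended (as a new
rightmost height-1 column) to the shape formed by the `k`-ribbons containing larger
entries, or stacked on top of a single such `k`-ribbon.  Equivalently (and this is how we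
formalize it): the bottom entries strictly decrease from left to right (in particular the
`k`-ribbon containing the leftmost square of the bottom row contains `n`), and in each
column of height 2 the top entry is smaller than the bottom entry. -/
def IsStandardTab (k n : ℕ) (T : Tab k) : Prop :=
  (∀ c ∈ T, Col.HeightsValid k c) ∧
  (Tab.entries T).Perm (List.range' 1 n) ∧
  List.Chain' (fun a b => b < a) (Tab.bottoms T) ∧
  (∀ c ∈ T, ∀ ht hb vt vb, c = Col.double ht hb vt vb → vt < vb)

/-- Updating a (partial) path tableau along one cover step `z ⋖ w` of `Z(k)`, placing the
value `i` in the `k` new squares of `w` relative to `z`:  if `w` is obtained from `z` by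
inserting a letter `1_j` after the prefix of `2`'s, a new height-1 column with a single
ribbon of height `j` filled with `i` is created there; if `w` is obtained from `z` by
changing the letter `1_h` just after the prefix of `2`'s into a `2`, the `k` new squares
of that column form a `k`-ribbon of height `k + 1 - h` filled with `i`, stacked on top of
the already present `k`-ribbon of height `h`. -/
def updateTab (k : ℕ) (i : ℕ) : Word k → Word k → Tab k → Tab k
  | Letter.two :: z', Letter.two :: w', c :: T => c :: updateTab k i z' w' T
  | Letter.one h :: _, Letter.two :: _, Col.single _ v :: T =>
      Col.double (k + 1 - h) h i v :: T
  | z, Letter.one j :: w', T => if z = w' then Col.single j i :: T else T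
  | _, _, T => T

/-- The `k`-ribbon Fibonacci path tableau determined by a saturated chain in `Z(k)`:
for each `i = 1, …, n` the value `i` is placed in the `k` new squares of `c i` relative
to `c (i-1)`. -/
def chainTab (k : ℕ) (c : ℕ → Word k) : ℕ → Tab k
  | 0 => []
  | m + 1 => updateTab k (m + 1) (c m) (c (m + 1)) (chainTab k c m)

/-- `T` is a `k`-ribbon Fibonacci path tableau with entries `1, …, n`: it is obtained
from some saturated chain `∅ = c 0 ⋖ c 1 ⋖ ⋯ ⋖ c n` in `Z(k)` by placing `i`'s in the
`k` new squares created at the `i`-th step. -/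
def IsPathTab (k n : ℕ) (T : Tab k) : Prop :=
  ∃ c : ℕ → Word k, IsZChain k n c ∧ T = chainTab k c n

end KRF
namespace KRF

/-- A `k`-colored permutation of length `n`: a permutation `x_1 x_2 ⋯ x_n` of `{1, …, n}`
(here `x_i = perm i + 1`, using `Fin n` positions and values) together with a color
`color i ∈ {1, …, k}` attached to each entry. -/
structure ColoredPerm (n k : ℕ) : Type where
  perm : Equiv.Perm (Fin n)
  color : Fin n → ℕ
  color_pos : ∀ i, 1 ≤ color i
  color_le : ∀ i, color i ≤ k

/-- Insertion of a value `x` of color `j` into a `k`-ribbon Fibonacci tableau: compare `x`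
with the value `t` in the `k`-ribbon containing the leftmost square of the bottom row.
If the tableau is empty or `x > t`, a new leftmost height-1 column consisting of a single
`k`-ribbon of height `j` filled with `x` is created.  If `x < t`, a `k`-ribbon of height
`j` filled with `x` is placed on top of the `k`-ribbon containing `t` (which is forced to
become a `k`-ribbon of height `k + 1 - j`); if a `k`-ribbon of height `l` filled with `b`
was already on top of the ribbon containing `t`, it is bumped out and the value `b` with
color `l` is inserted recursively into the tableau formed by the columns to the right. -/
def insertVal (k : ℕ) (x j : ℕ) : Tab k → Tab k
  | [] => [Col.single j x]
  | c :: rest =>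
    if Col.bottomVal c < x then Col.single j x :: c :: rest
    else
      match c with
      | Col.single _ v => Col.double j (k + 1 - j) x v :: rest
      | Col.double ht _ vt vb => Col.double j (k + 1 - j) x vb :: insertVal k vt ht rest

/-- The insertion tableau obtained after inserting the first `i` colored entries
`x_1^{j_1}, …, x_i^{j_i}` of the `k`-colored permutation `π` into the empty tableau. -/
def PPartial (k n : ℕ) (π : ColoredPerm n k) (i : ℕ) : Tab k :=
  ((List.finRange n).take i).foldl
    (fun T m => insertVal k ((π.perm m : ℕ) + 1) (π.color m) T) []

/-- The insertion tableau `P(π)` of a `k`-colored permutation. -/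
def PTab (k n : ℕ) (π : ColoredPerm n k) : Tab k := PPartial k n π n

/-- The chain of shapes of the partial insertion tableaux of `π`. -/
def QChain (k n : ℕ) (π : ColoredPerm n k) (i : ℕ) : Word k :=
  Tab.shape (PPartial k n π i)

/-- The recording tableau `Q(π)`: it has the same shape as `P(π)`, and after the `i`-th
insertion the value `i` is placed in the `k` squares by which the shape grew at step `i`. -/
def QTab (k n : ℕ) (π : ColoredPerm n k) : Tab k := chainTab k (QChain k n π) n

end KRF
namespace KRF

/-- `vert` of a column: the sum of `(height − 1)` over its `k`-ribbons. -/
def Col.vert {k : ℕ} : Col k → ℕ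
  | .single h _ => h - 1
  | .double ht hb _ _ => (ht - 1) + (hb - 1)

/-- `vert(T)`: the sum of `(j − 1)` over all `k`-ribbons of `T`, where `j` is the height
of the `k`-ribbon. -/
def Tab.vert {k : ℕ} (T : Tab k) : ℕ := (T.map Col.vert).sum

/-- `split_c` of a column: `k − j₁` if the column has height 2 with top ribbon of height
`j₁`, and `0` for a column of height 1.  `split(T)` is the sum over all columns. -/
def Tab.split (k : ℕ) (T : Tab k) : ℕ :=
  (T.map fun c => match c with
    | Col.double ht _ _ _ => k - ht
    | Col.single _ _ => 0).sum

/-- `color(π) = Σᵢ (jᵢ − 1)` where `jᵢ` is the color of the entry in position `i`. -/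
def colorStat {n k : ℕ} (π : ColoredPerm n k) : ℕ := ∑ i : Fin n, (π.color i - 1)

end KRF
namespace KRF

lemma updateTab_one (k i j : ℕ) (z : Word k) (T : Tab k) :
    updateTab k i z (Letter.one j :: z) T = Col.single j i :: T := by
  match z, T with
  | [], T => simp [updateTab]
  | Letter.one h :: z', [] => simp [updateTab]
  | Letter.one h :: z', c :: T => simp [updateTab]
  | Letter.two :: z', [] => simp [updateTab]
  | Letter.two :: z', c :: T => simp [updateTab]

lemma updateTab_top (k i h h' q : ℕ) (z : Word k) (Q : Tab k) :
    updateTab k i (Letter.one h :: z) (Letter.two :: z) (Col.single h' q :: Q)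
      = Col.double (k + 1 - h) h i q :: Q := by
  simp [updateTab]

lemma updateTab_rec (k i : ℕ) (z w : Word k) (c : Col k) (Q : Tab k) :
    updateTab k i (Letter.two :: z) (Letter.two :: w) (c :: Q)
      = c :: updateTab k i z w Q := by
  simp [updateTab]

lemma shape_cons {k} (c : Col k) (T : Tab k) : Tab.shape (c :: T) = c.shape :: Tab.shape T := rfl

lemma vert_cons {k} (c : Col k) (T : Tab k) : Tab.vert (c :: T) = c.vert + Tab.vert T := by
  simp [Tab.vert]

lemma split_single {k h v} (T : Tab k) : Tab.split k (Col.single h v :: T) = Tab.split k T := by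
  simp [Tab.split]

lemma split_double {k ht hb vt vb} (T : Tab k) :
    Tab.split k (Col.double ht hb vt vb :: T) = (k - ht) + Tab.split k T := by
  simp [Tab.split]

lemma insert_key (k : ℕ) (hk : 1 ≤ k) :
    ∀ (T Q : Tab k) (x j i : ℕ), (∀ c ∈ T, Col.HeightsValid k c) →
      Tab.shape Q = Tab.shape T → 1 ≤ j → j ≤ k →
      (∀ c ∈ insertVal k x j T, Col.HeightsValid k c) ∧
      Tab.shape (updateTab k i (Tab.shape T) (Tab.shape (insertVal k x j T)) Q)
        = Tab.shape (insertVal k x j T) ∧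
      Tab.vert (insertVal k x j T)
        + Tab.vert (updateTab k i (Tab.shape T) (Tab.shape (insertVal k x j T)) Q)
        + 2 * Tab.split k (updateTab k i (Tab.shape T) (Tab.shape (insertVal k x j T)) Q)
        + 2 * Tab.split k T
      = 2 * (j - 1) + Tab.vert T + Tab.vert Q + 2 * Tab.split k Q
        + 2 * Tab.split k (insertVal k x j T) := by
  intro T
  induction T with
  | nil =>
    intro Q x j i hT hQ hj1 hj2
    have hQnil : Q = [] := by simpa [Tab.shape] using hQ
    subst hQnil
    refine ⟨?_, ?_, ?_⟩
    · intro c hc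
      simp [insertVal] at hc
      subst hc
      exact ⟨hj1, hj2⟩
    · simp [insertVal, Tab.shape, updateTab, Col.shape]
    · simp [insertVal, Tab.shape, updateTab, Tab.vert, Tab.split, Col.vert]
      simp [Col.shape, updateTab_one, Col.vert]
      omega
  | cons c rest IH =>
    intro Q x j i hT hQ hj1 hj2
    by_cases hlt : Col.bottomVal c < x
    · have hins : insertVal k x j (c :: rest) = Col.single j x :: c :: rest := by
        simp [insertVal, hlt]
      rw [hins, shape_cons (Col.single j x),
        show (Col.single j x : Col k).shape = Letter.one j from rfl, updateTab_one]
      refine ⟨?_, ?_, ?_⟩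
      · intro d hd
        rw [List.mem_cons] at hd
        rcases hd with rfl | hd
        · exact ⟨hj1, hj2⟩
        · exact hT d hd
      · rw [shape_cons]
        simp [Col.shape, hQ]
      · simp only [vert_cons, split_single, Col.vert]
        omega
    · rcases Q with _ | ⟨d, Q'⟩
      · exfalso; simp [Tab.shape] at hQ
      cases c with
      | single h v =>
        rcases d with ⟨h', q⟩ | ⟨a, b, u, w⟩
        · have hQ2 : h' = h ∧ Tab.shape Q' = Tab.shape rest := by
            simpa [Tab.shape, Col.shape] using hQ
          obtain ⟨heq, hQ'⟩ := hQ2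
          have hins : insertVal k x j (Col.single h v :: rest)
              = Col.double j (k + 1 - j) x v :: rest := by
            simp [insertVal, hlt]
          obtain ⟨hh1, hh2⟩ := hT _ (List.mem_cons_self)
          rw [hins, shape_cons, shape_cons,
            show (Col.double j (k+1-j) x v : Col k).shape = Letter.two from rfl,
            show (Col.single h v : Col k).shape = Letter.one h from rfl,
            updateTab_top]
          refine ⟨?_, ?_, ?_⟩
          · intro d hd
            rw [List.mem_cons] at hd
            rcases hd with rfl | hd
            · exact ⟨hj1, hj2, rfl⟩
            · exact hT d (List.mem_cons_of_mem _ hd)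
          · rw [shape_cons]
            simp [Col.shape, hQ']
          · simp only [vert_cons, split_double, split_single, Col.vert]
            omega
        · exfalso
          simp [Tab.shape, Col.shape] at hQ
      | double ht hb vt vb =>
        rcases d with ⟨h', q⟩ | ⟨a, b, u, w⟩
        · exfalso
          simp [Tab.shape, Col.shape] at hQ
        · have hQ' : Tab.shape Q' = Tab.shape rest := by
            simpa [Tab.shape, Col.shape] using hQ
          have hins : insertVal k x j (Col.double ht hb vt vb :: rest)
              = Col.double j (k + 1 - j) x vb :: insertVal k vt ht rest := by
            simp [insertVal, hlt]
          obtain ⟨hht1, hht2, hhb⟩ := hT _ (List.mem_cons_self)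
          have hrest : ∀ d ∈ rest, Col.HeightsValid k d :=
            fun d hd => hT d (List.mem_cons_of_mem _ hd)
          obtain ⟨ih1, ih2, ih3⟩ := IH Q' vt ht i hrest hQ' hht1 hht2
          rw [hins, shape_cons, shape_cons,
            show (Col.double j (k+1-j) x vb : Col k).shape = Letter.two from rfl,
            show (Col.double ht hb vt vb : Col k).shape = Letter.two from rfl,
            updateTab_rec]
          refine ⟨?_, ?_, ?_⟩
          · intro d hd
            rw [List.mem_cons] at hd
            rcases hd with rfl | hd
            · exact ⟨hj1, hj2, rfl⟩
            · exact ih1 d hd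
          · rw [shape_cons]
            simp [Col.shape, ih2]
          · simp only [vert_cons, split_double, Col.vert]
            omega


lemma PPartial_succ (k n : ℕ) (π : ColoredPerm n k) (i : ℕ) (hi : i < n) :
    PPartial k n π (i + 1)
      = insertVal k ((π.perm ((List.finRange n)[i]'(by simpa using hi)) : ℕ) + 1)
          (π.color ((List.finRange n)[i]'(by simpa using hi))) (PPartial k n π i) := by
  have hl : i < (List.finRange n).length := by simpa using hi
  unfold PPartial
  rw [List.take_succ, List.getElem?_eq_getElem hl]
  simp [List.foldl_append]

lemma main_inv (k n : ℕ) (hk : 1 ≤ k) (π : ColoredPerm n k) :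
    ∀ i, i ≤ n →
      (∀ c ∈ PPartial k n π i, Col.HeightsValid k c) ∧
      Tab.shape (chainTab k (QChain k n π) i) = QChain k n π i ∧
      Tab.vert (PPartial k n π i) + Tab.vert (chainTab k (QChain k n π) i)
        + 2 * Tab.split k (chainTab k (QChain k n π) i)
      = 2 * (((List.finRange n).take i).map (fun m => π.color m - 1)).sum
        + 2 * Tab.split k (PPartial k n π i) := by
  intro i
  induction i with
  | zero =>
    intro _
    refine ⟨by simp [PPartial], by simp [chainTab, QChain, PPartial, Tab.shape], ?_⟩
    simp [PPartial, chainTab, Tab.vert, Tab.split]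
  | succ i ih =>
    intro hi1
    have hi : i < n := hi1
    obtain ⟨ih1, ih2, ih3⟩ := ih (le_of_lt hi)
    have hl : i < (List.finRange n).length := by simpa using hi
    set m := (List.finRange n)[i]'hl with hm
    have hstep := PPartial_succ k n π i hi
    rw [← hm] at hstep
    have hQchain : QChain k n π i = Tab.shape (PPartial k n π i) := rfl
    have hQchain1 : QChain k n π (i+1) = Tab.shape (PPartial k n π (i+1)) := rfl
    have hshape : Tab.shape (chainTab k (QChain k n π) i) = Tab.shape (PPartial k n π i) := by
      rw [ih2, hQchain]
    obtain ⟨k1, k2, k3⟩ := insert_key k hk (PPartial k n π i) (chainTab k (QChain k n π) i)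
      ((π.perm m : ℕ) + 1) (π.color m) (i + 1) ih1 hshape (π.color_pos m) (π.color_le m)
    have hchain : chainTab k (QChain k n π) (i+1)
        = updateTab k (i+1) (Tab.shape (PPartial k n π i))
            (Tab.shape (insertVal k ((π.perm m : ℕ) + 1) (π.color m) (PPartial k n π i)))
            (chainTab k (QChain k n π) i) := by
      show updateTab k (i+1) (QChain k n π i) (QChain k n π (i+1)) _ = _
      rw [hQchain, hQchain1, hstep]
    have hsum : (((List.finRange n).take (i+1)).map (fun m => π.color m - 1)).sum
        = (((List.finRange n).take i).map (fun m => π.color m - 1)).sum + (π.color m - 1) := by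
      rw [List.take_succ, List.getElem?_eq_getElem hl, ← hm]
      simp
    rw [hstep, hchain, hsum]
    refine ⟨k1, ?_, ?_⟩
    · rw [k2, ← hstep, hQchain1]
    · omega


/-- **color-to-spin.**  Let `π` be a `k`-colored permutation of length `n`
(colored with colors `1, …, k`) and let `(P, Q) = (P(π), Q(π))` be the pair of tableaux
obtained by the `k`-ribbon insertion algorithm.  Then
`color(π) = spin(P,Q) = (1/2)·(vert P + vert Q) + (split Q − split P)`. -/
theorem color_eq_spin (k n : ℕ) (hk : 1 ≤ k) (π : ColoredPerm n k) :
    (colorStat π : ℚ) =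
      ((Tab.vert (PTab k n π) : ℚ) + (Tab.vert (QTab k n π) : ℚ)) / 2 +
        ((Tab.split k (QTab k n π) : ℚ) - (Tab.split k (PTab k n π) : ℚ)) := by
  obtain ⟨_, _, h3⟩ := main_inv k n hk π n le_rfl
  have htake : (List.finRange n).take n = List.finRange n := by
    apply List.take_of_length_le
    simp
  rw [htake] at h3
  have hcolor : colorStat π = ((List.finRange n).map (fun m => π.color m - 1)).sum := by
    rw [colorStat, Fin.sum_univ_def]
  have hP : PTab k n π = PPartial k n π n := rfl
  have hQ : QTab k n π = chainTab k (QChain k n π) n := rfl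
  rw [hP, hQ, hcolor]
  have h3' : (Tab.vert (PPartial k n π n) : ℚ) + (Tab.vert (chainTab k (QChain k n π) n) : ℚ)
      + 2 * (Tab.split k (chainTab k (QChain k n π) n) : ℚ)
      = 2 * (((List.finRange n).map (fun m => π.color m - 1)).sum : ℚ)
        + 2 * (Tab.split k (PPartial k n π n) : ℚ) := by
    exact_mod_cast congrArg (fun x : ℕ => (x : ℚ)) h3
  linarith


end KRF
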